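/- Let a, b be real numbers with −1/2 ≤ a ≤ 0, b > 0 and a² + b² ≥ 1, and let Λ ⊂ ℝ² be the lattice generated over ℤ by v₁ = (1,0) and v₂ = (a,b). Then the Voronoi cell of 0, V(0) = {x ∈ ℝ² : ‖x‖ ≤ ‖x − λ‖ for all λ ∈ Λ}, equals the intersection of the six half-planes {x : |⟨x, v⟩| ≤ ‖v‖²/2} for v ∈ {(1,0), (a,b), (1+a,b)}. That is, when the angle θ between the basis vectors satisfies π/2 < θ ≤ 2π/3, the third relevant vector is (1+a, b). -/

import Mathlib

open scoped RealInnerProductSpace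

lemma quad_aux (p q : ℤ) (hp : 0 ≤ p) (hq : 0 ≤ q) (h : ¬(p = 1 ∧ q = 1)) :
    0 ≤ p^2 + q^2 - p*q - p - q := by
  rcases lt_or_ge p 2 with hp2 | hp2
  · interval_cases p
    · nlinarith
    · rcases lt_or_ge q 2 with hq2 | hq2
      · interval_cases q <;> omega
      · nlinarith
  · rcases lt_or_ge q 2 with hq2 | hq2
    · interval_cases q <;> nlinarith
    · nlinarith [sq_nonneg (p - q)]

lemma key_ineq (a b s t : ℝ) (ha0 : -(1/2) ≤ a) (ha : a ≤ 0) (hab : 1 ≤ a^2 + b^2)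
    (hs : |s| ≤ 1/2) (ht : |t| ≤ (a^2+b^2)/2) (hu : |s+t| ≤ ((1+a)^2+b^2)/2)
    (m n : ℤ) :
    2 * ((m:ℝ) * s + (n:ℝ) * t) ≤ (m:ℝ)^2 + 2*(m:ℝ)*(n:ℝ)*a + (n:ℝ)^2*(a^2+b^2) := by
  by_cases hmn : |m| = 1 ∧ |n| = 1
  · obtain ⟨hm, hn⟩ := hmn
    rw [abs_le] at hs ht hu
    rcases (abs_eq (by norm_num : (0:ℤ) ≤ 1)).mp hm with hm | hm <;>
      rcases (abs_eq (by norm_num : (0:ℤ) ≤ 1)).mp hn with hn | hn <;>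
        subst hm <;> subst hn <;> push_cast <;> nlinarith
  · have h1 : (0:ℝ) ≤ |(m:ℝ)|^2 + |(n:ℝ)|^2 - |(m:ℝ)| * |(n:ℝ)| - |(m:ℝ)| - |(n:ℝ)| := by
      have h := quad_aux |m| |n| (abs_nonneg _) (abs_nonneg _) hmn
      exact_mod_cast h
    set M := |(m:ℝ)| with hM
    set N := |(n:ℝ)| with hN
    have hms : (m:ℝ) * s ≤ M * (1/2) := by
      calc (m:ℝ) * s ≤ |(m:ℝ) * s| := le_abs_self _
        _ = M * |s| := by rw [abs_mul]
        _ ≤ M * (1/2) := by apply mul_le_mul_of_nonneg_left hs (abs_nonneg _)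
    have hnt : (n:ℝ) * t ≤ N * ((a^2+b^2)/2) := by
      calc (n:ℝ) * t ≤ |(n:ℝ) * t| := le_abs_self _
        _ = N * |t| := by rw [abs_mul]
        _ ≤ N * ((a^2+b^2)/2) := by apply mul_le_mul_of_nonneg_left ht (abs_nonneg _)
    have h2a : -(M*N) ≤ 2*(m:ℝ)*(n:ℝ)*a := by
      have h1' : |2*(m:ℝ)*(n:ℝ)*a| ≤ M*N := by
        rw [show (2*(m:ℝ)*(n:ℝ)*a) = ((m:ℝ)*(n:ℝ))*(2*a) by ring, abs_mul, abs_mul]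
        have : |2*a| ≤ 1 := by rw [abs_le]; constructor <;> linarith
        calc M*N*|2*a| ≤ M*N*1 :=
          mul_le_mul_of_nonneg_left this (by positivity)
          _ = M*N := by ring
      linarith [neg_abs_le (2*(m:ℝ)*(n:ℝ)*a)]
    have hN1 : 0 ≤ N^2 - N := by
      rcases eq_or_ne n 0 with h | h
      · simp [hN, h]
      · have : (1:ℝ) ≤ N := by
          rw [hN, ← Int.cast_abs]
          exact_mod_cast Int.one_le_abs h
        nlinarith
    have hC : 0 ≤ (N^2 - N) * (a^2 + b^2 - 1) := by
      apply mul_nonneg hN1; linarith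
    have hm2 : (m:ℝ)^2 = M^2 := (sq_abs _).symm
    have hn2 : (n:ℝ)^2 = N^2 := (sq_abs _).symm
    nlinarith [hms, hnt, h2a, h1, hC]

lemma inner_two (x y : EuclideanSpace ℝ (Fin 2)) : ⟪x, y⟫ = x 0 * y 0 + x 1 * y 1 := by
  simp [PiLp.inner_apply, Fin.sum_univ_two, RCLike.inner_apply, mul_comm]

lemma zsmul_inner (k : ℤ) (v w : EuclideanSpace ℝ (Fin 2)) : ⟪v, k • w⟫ = k * ⟪v, w⟫ := by
  rw [← Int.cast_smul_eq_zsmul ℝ, real_inner_smul_right]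

lemma zsmul_inner_left (k : ℤ) (v w : EuclideanSpace ℝ (Fin 2)) : ⟪k • v, w⟫ = k * ⟪v, w⟫ := by
  rw [← Int.cast_smul_eq_zsmul ℝ, real_inner_smul_left]

lemma norm_le_iff_voro (x p : EuclideanSpace ℝ (Fin 2)) :
    ‖x‖ ≤ ‖x - p‖ ↔ 2 * ⟪x, p⟫ ≤ ‖p‖ ^ 2 := by
  have hexp : ‖x - p‖ ^ 2 = ‖x‖ ^ 2 - 2 * ⟪x, p⟫ + ‖p‖ ^ 2 := by
    rw [norm_sub_sq_real]
  constructor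
  · intro h; nlinarith [norm_nonneg x, norm_nonneg (x - p)]
  · intro h; nlinarith [norm_nonneg x, norm_nonneg (x - p)]

/-- For a Minkowski-reduced basis `{(1,0),(a,b)}` of a two-dimensional lattice with
`−1/2 ≤ a ≤ 0`, `b > 0`, `a² + b² ≥ 1` (obtuse angle `π/2 < θ ≤ 2π/3`), the Voronoi cell
of `0` is the intersection of the six half-planes determined by the relevant vectors
`±(1,0)`, `±(a,b)`, `±(1+a,b)`. -/
theorem voronoi_cell_eq_halfplanes_obtuse (a b : ℝ)
    (ha0 : -(1 / 2) ≤ a) (ha : a ≤ 0) (hb : 0 < b) (hab : 1 ≤ a ^ 2 + b ^ 2)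
    (v₁ v₂ v₃ : EuclideanSpace ℝ (Fin 2))
    (hv₁ : v₁ 0 = 1 ∧ v₁ 1 = 0)
    (hv₂ : v₂ 0 = a ∧ v₂ 1 = b)
    (hv₃ : v₃ 0 = 1 + a ∧ v₃ 1 = b)
    (Λ : Set (EuclideanSpace ℝ (Fin 2)))
    (hΛ : Λ = {p | ∃ m n : ℤ, p = m • v₁ + n • v₂}) :
    {x : EuclideanSpace ℝ (Fin 2) | ∀ p ∈ Λ, ‖x‖ ≤ ‖x - p‖} =
      {x | abs (⟪x, v₁⟫) ≤ ‖v₁‖ ^ 2 / 2} ∩ {x | abs (⟪x, v₂⟫) ≤ ‖v₂‖ ^ 2 / 2} ∩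
        {x | abs (⟪x, v₃⟫) ≤ ‖v₃‖ ^ 2 / 2} := by
  obtain ⟨hv₁0, hv₁1⟩ := hv₁
  obtain ⟨hv₂0, hv₂1⟩ := hv₂
  obtain ⟨hv₃0, hv₃1⟩ := hv₃
  subst hΛ
  have hv₃eq : v₃ = v₁ + v₂ := by
    ext i
    fin_cases i <;> simp [PiLp.add_apply, hv₁0, hv₁1, hv₂0, hv₂1, hv₃0, hv₃1]
  have n1 : ‖v₁‖ ^ 2 = 1 := by
    rw [← real_inner_self_eq_norm_sq, inner_two, hv₁0, hv₁1]; norm_num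
  have n2 : ‖v₂‖ ^ 2 = a ^ 2 + b ^ 2 := by
    rw [← real_inner_self_eq_norm_sq, inner_two, hv₂0, hv₂1]; ring
  have n3 : ‖v₃‖ ^ 2 = (1 + a) ^ 2 + b ^ 2 := by
    rw [← real_inner_self_eq_norm_sq, inner_two, hv₃0, hv₃1]; ring
  have i12 : ⟪v₁, v₂⟫ = a := by
    rw [inner_two, hv₁0, hv₁1, hv₂0, hv₂1]; ring
  ext x
  simp only [Set.mem_setOf_eq, Set.mem_inter_iff]
  constructor
  · intro h
    have key : ∀ m n : ℤ, 2 * ⟪x, (m : ℤ) • v₁ + (n : ℤ) • v₂⟫ ≤ ‖(m : ℤ) • v₁ + (n : ℤ) • v₂‖ ^ 2 :=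
      fun m n => (norm_le_iff_voro x _).mp (h _ ⟨m, n, rfl⟩)
    have k10 := key 1 0
    have k10' := key (-1) 0
    have k01 := key 0 1
    have k01' := key 0 (-1)
    have k11 := key 1 1
    have k11' := key (-1) (-1)
    simp only [one_zsmul, zero_zsmul, add_zero, zero_add, neg_zsmul, neg_neg,
      inner_neg_right, norm_neg, inner_add_right, ← hv₃eq, inner_neg_neg,
      show -v₁ + -v₂ = -(v₁ + v₂) by abel] at k10 k10' k01 k01' k11 k11'
    refine ⟨⟨?_, ?_⟩, ?_⟩
    · rw [abs_le]; constructor <;> linarith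
    · rw [abs_le]; constructor <;> linarith
    · rw [abs_le]; constructor <;> linarith
  · rintro ⟨⟨h1, h2⟩, h3⟩ p ⟨m, n, rfl⟩
    rw [norm_le_iff_voro]
    have hip : ⟪x, (m : ℤ) • v₁ + (n : ℤ) • v₂⟫ = m * ⟪x, v₁⟫ + n * ⟪x, v₂⟫ := by
      rw [inner_add_right, zsmul_inner, zsmul_inner]
    have hnp : ‖(m : ℤ) • v₁ + (n : ℤ) • v₂‖ ^ 2
        = (m:ℝ)^2 + 2*(m:ℝ)*(n:ℝ)*a + (n:ℝ)^2*(a^2+b^2) := by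
      have i11 : ⟪v₁, v₁⟫ = 1 := by rw [inner_two, hv₁0, hv₁1]; norm_num
      have i22 : ⟪v₂, v₂⟫ = a ^ 2 + b ^ 2 := by rw [inner_two, hv₂0, hv₂1]; ring
      have i21 : ⟪v₂, v₁⟫ = a := by rw [inner_two, hv₁0, hv₁1, hv₂0, hv₂1]; ring
      rw [← real_inner_self_eq_norm_sq, inner_add_add_self]
      simp only [zsmul_inner, zsmul_inner_left, i11, i22, i12, i21]
      ring
    rw [hip, hnp]
    have hu : |⟪x, v₁⟫ + ⟪x, v₂⟫| ≤ ((1 + a) ^ 2 + b ^ 2) / 2 := by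
      rw [← inner_add_right, ← hv₃eq]; rw [n3] at h3; exact h3
    rw [n1] at h1; rw [n2] at h2
    exact key_ineq a b _ _ ha0 ha hab h1 h2 hu m n
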